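/- Let p, r, k be positive integers with r ≤ p and r ≤ k, and let Σ be a real symmetric p×p matrix. Define V₁ as the supremum of ⟨U Uᵀ, Σ⟩ over all pairs (U, Z) where U is a real p×r matrix, Z ∈ {0,1}^{p×r}, ∑_{i=1}^p ∑_{t=1}^r Z_{i,t} ≤ k, Uᵀ U = I_r, and U_{i,t} = 0 whenever Z_{i,t} = 0. Define V₂ as the supremum of ⟨Y, Σ⟩ over all tuples (Y, (Y^t)_{t=1}^r, Z) where Z ∈ {0,1}^{p×r} with ∑_{i,t} Z_{i,t} ≤ k, each Y^t is a real symmetric p×p positive semidefinite matrix with trace(Y^t) = 1 and rank(Y^t) = 1 and Y^t_{i,j} = 0 for all j whenever Z_{i,t} = 0, Y = ∑_{t=1}^r Y^t, and Y ⪯ Diag(w) where w_i = min(1, ∑_{t=1}^r Z_{i,t}). Then V₁ = V₂. -/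

import Mathlib

open Matrix


lemma myVecMulVec_mulVec {n : ℕ} (u v x : Fin n → ℝ) :
    vecMulVec u v *ᵥ x = (v ⬝ᵥ x) • u := by
  ext i
  simp only [mulVec, dotProduct, vecMulVec_apply, Pi.smul_apply, smul_eq_mul,
    Finset.sum_mul]
  exact Finset.sum_congr rfl fun j _ => by ring

lemma myOuter_posSemidef {n : ℕ} (u : Fin n → ℝ) : (vecMulVec u u).PosSemidef := by
  rw [posSemidef_iff_dotProduct_mulVec]
  constructor
  · ext i j
    simp [vecMulVec_apply, conjTranspose_apply, mul_comm]
  · intro x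
    rw [myVecMulVec_mulVec, dotProduct_smul]
    have : star x ⬝ᵥ u = u ⬝ᵥ x := by simp [dotProduct_comm]
    rw [this]
    have h2 : (u ⬝ᵥ x) • (u ⬝ᵥ x) = (u ⬝ᵥ x)^2 := by rw [smul_eq_mul, sq]
    rw [h2]
    positivity

lemma myOuter_rank_one {n : ℕ} (u : Fin n → ℝ) (hu : u ≠ 0) :
    (vecMulVec u u).rank = 1 := by
  have huu : u ⬝ᵥ u ≠ 0 := fun h => hu (dotProduct_self_eq_zero.mp h)
  have hrange : LinearMap.range (vecMulVec u u).mulVecLin = Submodule.span ℝ {u} := by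
    apply le_antisymm
    · rintro _ ⟨x, rfl⟩
      rw [mulVecLin_apply, myVecMulVec_mulVec]
      exact Submodule.smul_mem _ _ (Submodule.mem_span_singleton_self u)
    · rw [Submodule.span_le, Set.singleton_subset_iff]
      refine ⟨(u ⬝ᵥ u)⁻¹ • u, ?_⟩
      rw [mulVecLin_apply, myVecMulVec_mulVec, dotProduct_smul, smul_eq_mul,
        inv_mul_cancel₀ huu, one_smul]
  rw [Matrix.rank, hrange, finrank_span_singleton hu]

lemma myPsd_rank_one_decomp {n : ℕ} (A : Matrix (Fin n) (Fin n) ℝ)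
    (hA : A.PosSemidef) (htr : A.trace = 1) (hrank : A.rank = 1) :
    ∃ u : Fin n → ℝ, A = vecMulVec u u := by
  have hsymm : ∀ i j, A j i = A i j := fun i j => by
    have := hA.1.apply i j; simpa using this
  have hdiag : ∀ i, 0 ≤ A i i := fun i => by
    have := hA.dotProduct_mulVec_nonneg (Pi.single i 1)
    simpa [mulVec_single, dotProduct, Pi.single_apply] using this
  have hex : ∃ i0, A i0 i0 ≠ 0 := by
    by_contra h
    push_neg at h
    have : A.trace = 0 := by
      simp only [Matrix.trace, Matrix.diag]
      exact Finset.sum_eq_zero fun i _ => h i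
    rw [this] at htr; norm_num at htr
  obtain ⟨i0, hi0⟩ := hex
  have hc : 0 < A i0 i0 := lt_of_le_of_ne (hdiag i0) (Ne.symm hi0)
  set v : Fin n → ℝ := fun i => A i i0 with hv
  have hvmem : v ∈ LinearMap.range A.mulVecLin := by
    refine ⟨Pi.single i0 1, ?_⟩
    ext i
    simp [mulVec_single, hv]
  have hv0 : v ≠ 0 := fun h => hi0 (by simpa [hv] using congrFun h i0)
  have hrank' : Module.finrank ℝ (LinearMap.range A.mulVecLin) = 1 := hrank
  have hone := (finrank_eq_one_iff_of_nonzero'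
    (⟨v, hvmem⟩ : LinearMap.range A.mulVecLin)
    (by simpa using hv0)).mp hrank'
  have hcol : ∀ j i, A i j = A i0 j / A i0 i0 * A i i0 := by
    intro j i
    have hwj : (fun i => A i j) ∈ LinearMap.range A.mulVecLin := by
      refine ⟨Pi.single j 1, ?_⟩
      ext i
      simp [mulVec_single]
    obtain ⟨d, hd⟩ := hone ⟨_, hwj⟩
    have hd' : d • v = fun i => A i j := by
      have := congrArg (Subtype.val) hd
      simpa using this
    have hdi : ∀ i, d * A i i0 = A i j := fun i => congrFun hd' i
    have hdi0 : d * A i0 i0 = A i0 j := hdi i0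
    have : d = A i0 j / A i0 i0 := by
      field_simp
      linarith [hdi0]
    rw [← hdi i, this]
  refine ⟨fun i => A i i0 / Real.sqrt (A i0 i0), ?_⟩
  ext i j
  rw [vecMulVec_apply, hcol j i]
  rw [div_mul_div_comm, Real.mul_self_sqrt (le_of_lt hc)]
  rw [hsymm i0 j]
  ring


lemma myDotProduct_sum {n m : ℕ} (y : Fin n → ℝ) (f : Fin m → Fin n → ℝ) :
    y ⬝ᵥ (∑ t, f t) = ∑ t, y ⬝ᵥ f t := by
  simp only [dotProduct, Finset.sum_apply, Finset.mul_sum]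
  exact Finset.sum_comm

lemma mySum_dotProduct {n m : ℕ} (y : Fin n → ℝ) (f : Fin m → Fin n → ℝ) :
    (∑ t, f t) ⬝ᵥ y = ∑ t, f t ⬝ᵥ y := by
  simp only [dotProduct, Finset.sum_apply, Finset.sum_mul]
  exact Finset.sum_comm

lemma mySum_mulVec {n m r : ℕ} (A : Fin r → Matrix (Fin n) (Fin m) ℝ) (x : Fin m → ℝ) :
    (∑ t, A t) *ᵥ x = ∑ t, A t *ᵥ x := by
  ext i
  simp only [mulVec, dotProduct, Finset.sum_apply, Matrix.sum_apply, Finset.sum_mul]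
  exact Finset.sum_comm

lemma myBessel {n r : ℕ} (u : Fin r → Fin n → ℝ)
    (horth : ∀ s t, u s ⬝ᵥ u t = if s = t then 1 else 0) (y : Fin n → ℝ) :
    ∑ t, (u t ⬝ᵥ y) ^ 2 ≤ y ⬝ᵥ y := by
  have hqq : 0 ≤ (y - ∑ t, (u t ⬝ᵥ y) • u t) ⬝ᵥ (y - ∑ t, (u t ⬝ᵥ y) • u t) :=
    Finset.sum_nonneg fun i _ => mul_self_nonneg _
  have h1 : y ⬝ᵥ (∑ t, (u t ⬝ᵥ y) • u t) = ∑ t, (u t ⬝ᵥ y) ^ 2 := by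
    rw [myDotProduct_sum]
    refine Finset.sum_congr rfl fun t _ => ?_
    rw [dotProduct_smul, smul_eq_mul, dotProduct_comm, sq]
  have h2 : (∑ t, (u t ⬝ᵥ y) • u t) ⬝ᵥ y = ∑ t, (u t ⬝ᵥ y) ^ 2 := by
    rw [mySum_dotProduct]
    refine Finset.sum_congr rfl fun t _ => ?_
    rw [smul_dotProduct, smul_eq_mul, sq]
  have h3 : (∑ t, (u t ⬝ᵥ y) • u t) ⬝ᵥ (∑ t, (u t ⬝ᵥ y) • u t) = ∑ t, (u t ⬝ᵥ y) ^ 2 := by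
    rw [mySum_dotProduct]
    refine Finset.sum_congr rfl fun s _ => ?_
    rw [smul_dotProduct, smul_eq_mul, myDotProduct_sum]
    have hterm : ∀ t, u s ⬝ᵥ ((u t ⬝ᵥ y) • u t) = if s = t then u s ⬝ᵥ y else 0 := by
      intro t
      rw [dotProduct_smul, smul_eq_mul, horth s t]
      by_cases h : s = t
      · subst h; simp
      · simp [h]
    rw [Finset.sum_congr rfl fun t _ => hterm t]
    simp [sq]
  rw [sub_dotProduct, dotProduct_sub, dotProduct_sub, h1, h2, h3] at hqq
  linarith

lemma myW {r : ℕ} (z : Fin r → ℝ) (hz : ∀ t, z t = 0 ∨ z t = 1) :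
    (min 1 (∑ t, z t) = 0 ∧ ∀ t, z t = 0) ∨ min 1 (∑ t, z t) = 1 := by
  by_cases h : ∀ t, z t = 0
  · left
    refine ⟨?_, h⟩
    simp [Finset.sum_eq_zero fun t _ => h t]
  · right
    push_neg at h
    obtain ⟨t0, ht0⟩ := h
    have h1 : z t0 = 1 := (hz t0).resolve_left ht0
    have hle : (1:ℝ) ≤ ∑ t, z t := by
      calc (1:ℝ) = z t0 := h1.symm
        _ ≤ ∑ t, z t := Finset.single_le_sum
            (fun t _ => by rcases hz t with h | h <;> simp [h]) (Finset.mem_univ t0)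
    simp [min_eq_left hle]

/-- Theorem 1: the sparse PCA problem with orthogonality constraints attains the same
optimal value as its sparsity- and rank-constrained reformulation. -/
theorem stmt5 (p r k : ℕ) (hp : 1 ≤ p) (hr : 1 ≤ r) (hk : 1 ≤ k)
    (hrp : r ≤ p) (hrk : r ≤ k)
    (Sig : Matrix (Fin p) (Fin p) ℝ) (hSym : Sig.IsSymm) :
    sSup {v : ℝ | ∃ (U : Matrix (Fin p) (Fin r) ℝ) (Z : Matrix (Fin p) (Fin r) ℝ),
        (∀ i t, Z i t = 0 ∨ Z i t = 1) ∧
        (∑ i, ∑ t, Z i t) ≤ (k : ℝ) ∧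
        Uᵀ * U = 1 ∧
        (∀ i t, Z i t = 0 → U i t = 0) ∧
        v = ∑ i, ∑ j, (U * Uᵀ) i j * Sig i j} =
    sSup {v : ℝ | ∃ (Y : Matrix (Fin p) (Fin p) ℝ)
        (Yt : Fin r → Matrix (Fin p) (Fin p) ℝ)
        (Z : Matrix (Fin p) (Fin r) ℝ),
        (∀ i t, Z i t = 0 ∨ Z i t = 1) ∧
        (∑ i, ∑ t, Z i t) ≤ (k : ℝ) ∧
        (∀ t, (Yt t).PosSemidef ∧ (Yt t).trace = 1 ∧ (Yt t).rank = 1) ∧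
        (∀ t i, Z i t = 0 → ∀ j, Yt t i j = 0) ∧
        Y = ∑ t, Yt t ∧
        (Matrix.diagonal (fun i => min 1 (∑ t, Z i t)) - Y).PosSemidef ∧
        v = ∑ i, ∑ j, Y i j * Sig i j} := by
  have hset : {v : ℝ | ∃ (U : Matrix (Fin p) (Fin r) ℝ) (Z : Matrix (Fin p) (Fin r) ℝ),
        (∀ i t, Z i t = 0 ∨ Z i t = 1) ∧
        (∑ i, ∑ t, Z i t) ≤ (k : ℝ) ∧
        Uᵀ * U = 1 ∧
        (∀ i t, Z i t = 0 → U i t = 0) ∧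
        v = ∑ i, ∑ j, (U * Uᵀ) i j * Sig i j} =
      {v : ℝ | ∃ (Y : Matrix (Fin p) (Fin p) ℝ)
        (Yt : Fin r → Matrix (Fin p) (Fin p) ℝ)
        (Z : Matrix (Fin p) (Fin r) ℝ),
        (∀ i t, Z i t = 0 ∨ Z i t = 1) ∧
        (∑ i, ∑ t, Z i t) ≤ (k : ℝ) ∧
        (∀ t, (Yt t).PosSemidef ∧ (Yt t).trace = 1 ∧ (Yt t).rank = 1) ∧
        (∀ t i, Z i t = 0 → ∀ j, Yt t i j = 0) ∧
        Y = ∑ t, Yt t ∧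
        (Matrix.diagonal (fun i => min 1 (∑ t, Z i t)) - Y).PosSemidef ∧
        v = ∑ i, ∑ j, Y i j * Sig i j} := by
    ext v
    simp only [Set.mem_setOf_eq]
    constructor
    · rintro ⟨U, Z, hZ01, hZk, hUU, hUZ, hv⟩
      set u : Fin r → Fin p → ℝ := fun t i => U i t with hu
      have horth : ∀ s t, u s ⬝ᵥ u t = if s = t then 1 else 0 := by
        intro s t
        have h := congrFun (congrFun hUU s) t
        simpa [Matrix.mul_apply, Matrix.one_apply, dotProduct, hu] using h
      have hunz : ∀ t, u t ≠ 0 := by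
        intro t h
        have := horth t t
        rw [h] at this
        simp at this
      refine ⟨∑ t, vecMulVec (u t) (u t), fun t => vecMulVec (u t) (u t), Z,
        hZ01, hZk, ?_, ?_, rfl, ?_, ?_⟩
      · intro t
        have htr : (vecMulVec (u t) (u t)).trace = 1 := by
          have h := horth t t
          simpa [Matrix.trace, Matrix.diag, vecMulVec_apply, dotProduct] using h
        exact ⟨myOuter_posSemidef _, htr, myOuter_rank_one _ (hunz t)⟩
      · intro t i hZ0 j
        simp [vecMulVec_apply, hu, hUZ i t hZ0]
      · rw [posSemidef_iff_dotProduct_mulVec]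
        constructor
        · -- Hermitian
          ext i j
          simp only [conjTranspose_apply, Matrix.sub_apply, Matrix.sum_apply,
            vecMulVec_apply, diagonal_apply, star_trivial]
          rw [Finset.sum_congr rfl fun t _ => mul_comm (u t j) (u t i)]
          by_cases h : i = j
          · subst h; simp
          · simp [h, Ne.symm h]
        · intro x
          rw [star_trivial, sub_mulVec, dotProduct_sub]
          have hDx : x ⬝ᵥ (diagonal (fun i => min 1 (∑ t, Z i t)) *ᵥ x)
              = ∑ i, min 1 (∑ t, Z i t) * x i * x i := by
            simp only [dotProduct, mulVec_diagonal]
            exact Finset.sum_congr rfl fun i _ => by ring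
          have hYxeq : x ⬝ᵥ ((∑ t, vecMulVec (u t) (u t)) *ᵥ x) = ∑ t, (u t ⬝ᵥ x) ^ 2 := by
            rw [mySum_mulVec]
            rw [Finset.sum_congr rfl fun t (_ : t ∈ Finset.univ) => myVecMulVec_mulVec (u t) (u t) x]
            rw [myDotProduct_sum]
            refine Finset.sum_congr rfl fun t _ => ?_
            rw [dotProduct_smul, smul_eq_mul, dotProduct_comm, sq]
          set y : Fin p → ℝ := fun i => min 1 (∑ t, Z i t) * x i with hy
          have hdx : ∀ t, u t ⬝ᵥ x = u t ⬝ᵥ y := by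
            intro t
            refine Finset.sum_congr rfl fun i _ => ?_
            rcases myW (fun t => Z i t) (fun t => hZ01 i t) with ⟨h0, hzi⟩ | h1
            · simp [hy, hu, hUZ i t (hzi t), h0]
            · simp [hy, h1]
          have hbessel : ∑ t, (u t ⬝ᵥ y) ^ 2 ≤ y ⬝ᵥ y := myBessel u horth y
          have hyy : y ⬝ᵥ y = ∑ i, min 1 (∑ t, Z i t) * x i * x i := by
            refine Finset.sum_congr rfl fun i _ => ?_
            rcases myW (fun t => Z i t) (fun t => hZ01 i t) with ⟨h1, _⟩ | h1 <;>
              simp [hy, h1] <;> ring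
          have hxy : ∑ t, (u t ⬝ᵥ x) ^ 2 = ∑ t, (u t ⬝ᵥ y) ^ 2 :=
            Finset.sum_congr rfl fun t _ => by rw [hdx t]
          rw [hDx, hYxeq, hxy, ← hyy]
          linarith
      · rw [hv]
        refine Finset.sum_congr rfl fun i _ => Finset.sum_congr rfl fun j _ => ?_
        congr 1
        simp [Matrix.mul_apply, Matrix.sum_apply, vecMulVec_apply, hu]
    · rintro ⟨Y, Yt, Z, hZ01, hZk, hYt, hYZ, hYsum, hPSD, hv⟩
      subst hYsum
      choose u hu using fun t => myPsd_rank_one_decomp (Yt t) (hYt t).1 (hYt t).2.1 (hYt t).2.2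
      have hnorm : ∀ t, u t ⬝ᵥ u t = 1 := by
        intro t
        have h := (hYt t).2.1
        rw [hu t] at h
        simpa [Matrix.trace, Matrix.diag, vecMulVec_apply, dotProduct] using h
      have horthaux : ∀ s t, t ≠ s → u t ⬝ᵥ u s = 0 := by
        intro s
        have hq := hPSD.dotProduct_mulVec_nonneg (u s)
        rw [star_trivial, sub_mulVec, dotProduct_sub] at hq
        have hD : u s ⬝ᵥ (diagonal (fun i => min 1 (∑ t, Z i t)) *ᵥ u s) ≤ 1 := by
          have hterm : ∀ i, u s i * (min 1 (∑ t, Z i t) * u s i) ≤ u s i * u s i := by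
            intro i
            nlinarith [mul_self_nonneg (u s i), min_le_left (1:ℝ) (∑ t, Z i t)]
          calc u s ⬝ᵥ (diagonal (fun i => min 1 (∑ t, Z i t)) *ᵥ u s)
              = ∑ i, u s i * (min 1 (∑ t, Z i t) * u s i) := by
                simp [dotProduct, mulVec_diagonal]
            _ ≤ ∑ i, u s i * u s i := Finset.sum_le_sum fun i _ => hterm i
            _ = 1 := hnorm s
        have hYq : u s ⬝ᵥ ((∑ t, Yt t) *ᵥ u s) = ∑ t, (u t ⬝ᵥ u s) ^ 2 := by
          rw [mySum_mulVec]
          rw [Finset.sum_congr rfl fun t (_ : t ∈ Finset.univ) => by rw [hu t]]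
          rw [Finset.sum_congr rfl fun t (_ : t ∈ Finset.univ) => myVecMulVec_mulVec (u t) (u t) (u s)]
          rw [myDotProduct_sum]
          refine Finset.sum_congr rfl fun t _ => ?_
          rw [dotProduct_smul, smul_eq_mul, dotProduct_comm, sq]
        rw [hYq] at hq
        have hsplit : ∑ t, (u t ⬝ᵥ u s) ^ 2
            = 1 + ∑ t ∈ Finset.univ.erase s, (u t ⬝ᵥ u s) ^ 2 := by
          rw [← Finset.add_sum_erase _ _ (Finset.mem_univ s), hnorm s, one_pow]
        have hrest : ∑ t ∈ Finset.univ.erase s, (u t ⬝ᵥ u s) ^ 2 ≤ 0 := by linarith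
        intro t hts
        have hz := (Finset.sum_eq_zero_iff_of_nonneg (fun t _ => sq_nonneg _)).mp
          (le_antisymm hrest (Finset.sum_nonneg fun t _ => sq_nonneg _)) t
          (Finset.mem_erase.mpr ⟨hts, Finset.mem_univ t⟩)
        exact pow_eq_zero_iff (two_ne_zero) |>.mp hz
      have horth : ∀ s t, u s ⬝ᵥ u t = if s = t then 1 else 0 := by
        intro s t
        by_cases hst : s = t
        · subst hst; simp [hnorm s]
        · rw [if_neg hst]
          exact horthaux t s hst
      refine ⟨Matrix.of fun i t => u t i, Z, hZ01, hZk, ?_, ?_, ?_⟩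
      · ext s t
        have h := horth s t
        simpa [Matrix.mul_apply, Matrix.one_apply, dotProduct] using h
      · intro i t hZ0
        have h := hYZ t i hZ0 i
        rw [hu t] at h
        exact mul_self_eq_zero.mp h
      · rw [hv]
        refine Finset.sum_congr rfl fun i _ => Finset.sum_congr rfl fun j _ => ?_
        congr 1
        rw [Matrix.sum_apply, Finset.sum_congr rfl fun t (_ : t ∈ Finset.univ) => by rw [hu t]]
        simp [Matrix.mul_apply, vecMulVec_apply]
  rw [hset]
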